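/- Under assumption (b−d)² < 3as with a, s > 0, for every r ∈ ℝ the system x³ − px² + (s/a)(x − x₀) = r, y = c − dx², z = s(x − x₀) (where p = (b−d)/a) has exactly one solution (x, y, z) ∈ ℝ³. -/

import Mathlib

theorem unique_equilibrium (a c d s b x₀ : ℝ) (ha : 0 < a) (hc : 0 < c) (hd : 0 < d)
    (hs : 0 < s) (hA : (b - d) ^ 2 < 3 * a * s)
    (p : ℝ) (hp : p = (b - d) / a) (r : ℝ) :
    ∃! u : ℝ × ℝ × ℝ,
      u.1 ^ 3 - p * u.1 ^ 2 + s / a * (u.1 - x₀) = r ∧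
      u.2.1 = c - d * u.1 ^ 2 ∧
      u.2.2 = s * (u.1 - x₀) := by
  set q : ℝ := s / a with hq
  have hq0 : 0 < q := div_pos hs ha
  have hPq : p ^ 2 < 3 * q := by
    rw [hp, hq, div_pow, div_lt_iff₀ (by positivity : (0:ℝ) < a ^ 2)]
    have h3 : 3 * (s / a) * a ^ 2 = 3 * a * s := by field_simp
    rw [h3]; exact hA
  set f : ℝ → ℝ := fun x => x ^ 3 - p * x ^ 2 + q * (x - x₀) with hf
  have hderiv : ∀ x : ℝ, HasDerivAt f (3 * x ^ 2 - 2 * p * x + q) x := by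
    intro x
    have h1 : HasDerivAt (fun x : ℝ => x ^ 3) (3 * x ^ 2) x := by
      simpa using hasDerivAt_pow 3 x
    have h2 : HasDerivAt (fun x : ℝ => p * x ^ 2) (p * (2 * x)) x := by
      simpa using (hasDerivAt_pow 2 x).const_mul p
    have h3 : HasDerivAt (fun x : ℝ => q * (x - x₀)) (q * 1) x :=
      ((hasDerivAt_id x).sub_const x₀).const_mul q
    have := (h1.sub h2).add h3
    refine this.congr_deriv ?_
    ring
  have hmono : StrictMono f := by
    apply strictMono_of_deriv_pos
    intro x
    rw [(hderiv x).deriv]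
    nlinarith [sq_nonneg (3 * x - p)]
  have hcont : Continuous f := by
    fun_prop
  have htop : Filter.Tendsto f Filter.atTop Filter.atTop := by
    have hlin : Filter.Tendsto (fun x : ℝ => x - q * x₀) Filter.atTop Filter.atTop := by
      simpa [sub_eq_add_neg] using
        Filter.tendsto_atTop_add_const_right Filter.atTop (-(q * x₀)) Filter.tendsto_id
    have hev : ∀ᶠ x in Filter.atTop, x - q * x₀ ≤ f x := by
      filter_upwards [Filter.eventually_ge_atTop (max 1 (p + 1))] with x hx
      have hx1 : (1:ℝ) ≤ x := le_trans (le_max_left _ _) hx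
      have hx2 : p + 1 ≤ x := le_trans (le_max_right _ _) hx
      simp only [hf]
      nlinarith [mul_nonneg hq0.le (by linarith : (0:ℝ) ≤ x), sq_nonneg x,
        mul_le_mul_of_nonneg_left (show (1:ℝ) ≤ x - p by linarith) (sq_nonneg x)]
    exact Filter.tendsto_atTop_mono' Filter.atTop hev hlin
  have hbot : Filter.Tendsto f Filter.atBot Filter.atBot := by
    have hlin : Filter.Tendsto (fun x : ℝ => x - q * x₀) Filter.atBot Filter.atBot := by
      simpa [sub_eq_add_neg] using
        Filter.tendsto_atBot_add_const_right Filter.atBot (-(q * x₀)) Filter.tendsto_id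
    have hev : ∀ᶠ x in Filter.atBot, f x ≤ x - q * x₀ := by
      filter_upwards [Filter.eventually_le_atBot (min (-1) (p - 1))] with x hx
      have hx1 : x ≤ (-1:ℝ) := le_trans hx (min_le_left _ _)
      have hx2 : x ≤ p - 1 := le_trans hx (min_le_right _ _)
      simp only [hf]
      nlinarith [mul_nonpos_of_nonneg_of_nonpos hq0.le (by linarith : x ≤ (0:ℝ)),
        sq_nonneg x,
        mul_le_mul_of_nonneg_left (show x - p ≤ (-1:ℝ) by linarith) (sq_nonneg x)]
    exact Filter.tendsto_atBot_mono' Filter.atBot hev hlin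
  obtain ⟨x, hx⟩ := hcont.surjective htop hbot r
  refine ⟨(x, c - d * x ^ 2, s * (x - x₀)), ⟨by simpa [hf] using hx, rfl, rfl⟩, ?_⟩
  rintro ⟨y1, y2, y3⟩ ⟨h1, h2, h3⟩
  have hy : y1 = x := by
    apply hmono.injective
    show f y1 = f x
    rw [hx]
    simpa [hf] using h1
  subst hy
  simp_all
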